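/- Let n = pq with p, q distinct primes, let e be coprime to φ(n), and let k be a positive integer. Then the number of units x modulo n with x^(e^k) ≡ x (mod n) equals gcd(e^k − 1, p − 1) · gcd(e^k − 1, q − 1). -/

import Mathlib

open Subgroup in
/-- In a finite cyclic group, the number of solutions of `x ^ m = 1` is
`gcd m (card G)`. -/
lemma card_pow_eq_one_eq_gcd (G : Type*) [Group G] [Fintype G] [IsCyclic G] (m : ℕ) :
    Nat.card {x : G // x ^ m = 1} = Nat.gcd m (Fintype.card G) := by
  classical
  set n := Fintype.card G with hn
  have hn0 : 0 < n := Fintype.card_pos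
  set d := Nat.gcd m n with hd
  have hdn : d ∣ n := Nat.gcd_dvd_right m n
  have hd0 : 0 < d := Nat.gcd_pos_of_pos_right m hn0
  -- solutions of `x ^ m = 1` coincide with solutions of `x ^ d = 1`
  have hiff : ∀ x : G, x ^ m = 1 ↔ x ^ d = 1 := fun x => by
    rw [hd, pow_gcd_eq_one]; exact ⟨fun h => ⟨h, pow_card_eq_one⟩, fun h => h.1⟩
  have hcard : Nat.card {x : G // x ^ m = 1} = Nat.card {x : G // x ^ d = 1} :=
    Nat.card_congr (Equiv.subtypeEquivRight hiff)
  rw [hcard]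
  -- upper bound
  have hle : Nat.card {x : G // x ^ d = 1} ≤ d := by
    rw [Nat.card_eq_fintype_card, Fintype.card_subtype]
    exact IsCyclic.card_pow_eq_one_le hd0
  -- lower bound
  obtain ⟨g, hg⟩ := IsCyclic.exists_generator (α := G)
  have hog : orderOf g = n := by
    rw [orderOf_eq_card_of_forall_mem_zpowers hg, Nat.card_eq_fintype_card]
  set h := g ^ (n / d) with hh
  have hoh : orderOf h = d := by
    rw [hh, orderOf_pow, hog, Nat.gcd_eq_right (Nat.div_dvd_of_dvd hdn),
      Nat.div_div_self hdn hn0.ne']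
  have hhd : h ^ d = 1 := by rw [← hoh]; exact pow_orderOf_eq_one h
  have hge : Nat.card (Subgroup.zpowers h) ≤ Nat.card {x : G // x ^ d = 1} := by
    refine Nat.card_le_card_of_injective
      (fun x => ⟨(x : G), ?_⟩) ?_
    · obtain ⟨j, hj⟩ := x.2
      simp only at hj
      rw [← hj, ← zpow_natCast, ← zpow_mul, mul_comm, zpow_mul, zpow_natCast, hhd, one_zpow]
    · intro a b hab
      simp only [Subtype.mk.injEq] at hab
      exact Subtype.ext hab
  rw [Nat.card_zpowers, hoh] at hge
  omega

/-- Transport of root-counting along a `MulEquiv`. -/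
lemma card_pow_eq_one_mulEquiv {M N : Type*} [Monoid M] [Monoid N] (f : M ≃* N) (m : ℕ) :
    Nat.card {x : M // x ^ m = 1} = Nat.card {y : N // y ^ m = 1} := by
  refine Nat.card_congr (f.toEquiv.subtypeEquiv fun x => ?_)
  simp [← map_pow, map_eq_one_iff f f.injective]

theorem stmt9 (p q e k : ℕ) (hp : p.Prime) (hq : q.Prime) (hpq : p ≠ q)
    (he : Nat.Coprime e (Nat.totient (p * q))) (hk : 0 < k) :
    Nat.card {x : ℕ // x < p * q ∧ Nat.Coprime x (p * q) ∧
        x ^ e ^ k ≡ x [MOD p * q]} =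
      Nat.gcd (e ^ k - 1) (p - 1) * Nat.gcd (e ^ k - 1) (q - 1) := by
  have hN0 : 0 < p * q := Nat.mul_pos hp.pos hq.pos
  haveI : NeZero (p * q) := ⟨hN0.ne'⟩
  haveI : Fact p.Prime := ⟨hp⟩
  haveI : Fact q.Prime := ⟨hq⟩
  -- `e ≥ 1`
  have htot : Nat.totient (p * q) = (p - 1) * (q - 1) := by
    rw [Nat.totient_mul ((Nat.coprime_primes hp hq).2 hpq), Nat.totient_prime hp,
      Nat.totient_prime hq]
  have he1 : 1 ≤ e := by
    rcases Nat.eq_zero_or_pos e with h0 | h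
    · exfalso
      have : Nat.totient (p * q) = 1 := by
        simpa [h0, Nat.coprime_zero_left] using he
      rw [htot] at this
      have hp1 : p - 1 = 1 := Nat.eq_one_of_mul_eq_one_right this
      have hq1 : q - 1 = 1 := Nat.eq_one_of_mul_eq_one_left this
      have : p = 2 := by omega
      have : q = 2 := by omega
      omega
    · exact h
  set m := e ^ k - 1 with hm
  have hek : e ^ k = m + 1 := by
    have : 1 ≤ e ^ k := Nat.one_le_pow _ _ he1
    omega
  -- step 1: translate to units of `ZMod (p*q)`
  have step1 : Nat.card {x : ℕ // x < p * q ∧ Nat.Coprime x (p * q) ∧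
      x ^ e ^ k ≡ x [MOD p * q]} = Nat.card {u : (ZMod (p * q))ˣ // u ^ m = 1} := by
    refine Nat.card_congr (Equiv.symm ?_)
    refine
      { toFun := fun u => ⟨((u : (ZMod (p * q))ˣ) : ZMod (p * q)).val,
          ZMod.val_lt _, ZMod.val_coe_unit_coprime _, ?_⟩
        invFun := fun x => ⟨ZMod.unitOfCoprime x.1 x.2.2.1, ?_⟩
        left_inv := ?_
        right_inv := ?_ }
    · -- congruence condition
      obtain ⟨u, hu⟩ := u
      have hu' : (u : ZMod (p * q)) ^ (e ^ k) = (u : ZMod (p * q)) := by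
        rw [hek, pow_succ]
        have : (u : (ZMod (p*q))ˣ) ^ m = 1 := hu
        have h2 : ((u ^ m : (ZMod (p*q))ˣ) : ZMod (p*q)) = 1 := by rw [this]; rfl
        push_cast at h2
        rw [h2, one_mul]
      rw [← ZMod.natCast_eq_natCast_iff]
      push_cast
      rw [ZMod.natCast_rightInverse _, hu']
    · -- unitOfCoprime is a root
      obtain ⟨x, hlt, hcop, hmod⟩ := x
      have hx : ((x : ℕ) : ZMod (p * q)) ^ (e ^ k) = ((x : ℕ) : ZMod (p * q)) := by
        have := (ZMod.natCast_eq_natCast_iff _ _ _).2 hmod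
        push_cast at this
        exact this
      have hxu : (ZMod.unitOfCoprime x hcop : ZMod (p * q)) = (x : ZMod (p * q)) :=
        ZMod.coe_unitOfCoprime x hcop
      have hunit : (ZMod.unitOfCoprime x hcop) ^ (e ^ k) = ZMod.unitOfCoprime x hcop := by
        apply Units.ext
        push_cast
        rw [hxu, hx]
      have : (ZMod.unitOfCoprime x hcop) ^ (m + 1) = ZMod.unitOfCoprime x hcop := by
        rw [← hek]; exact hunit
      rw [pow_succ] at this
      exact mul_right_cancel (by rw [this, one_mul])
    · -- left inverse
      rintro ⟨u, hu⟩
      apply Subtype.ext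
      apply Units.ext
      simp [ZMod.coe_unitOfCoprime, ZMod.natCast_rightInverse _]
    · -- right inverse
      rintro ⟨x, hlt, hcop, hmod⟩
      apply Subtype.ext
      simp only [ZMod.coe_unitOfCoprime]
      exact ZMod.val_cast_of_lt hlt
  rw [step1]
  -- step 2: CRT splitting
  have hcop : Nat.Coprime p q := (Nat.coprime_primes hp hq).2 hpq
  have crt : (ZMod (p * q))ˣ ≃* (ZMod p)ˣ × (ZMod q)ˣ :=
    (Units.mapEquiv (ZMod.chineseRemainder hcop).toMulEquiv).trans MulEquiv.prodUnits
  rw [card_pow_eq_one_mulEquiv crt m]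
  have split : Nat.card {u : (ZMod p)ˣ × (ZMod q)ˣ // u ^ m = 1} =
      Nat.card {a : (ZMod p)ˣ // a ^ m = 1} * Nat.card {b : (ZMod q)ˣ // b ^ m = 1} := by
    rw [← Nat.card_prod]
    refine Nat.card_congr ?_
    refine
      { toFun := fun u => (⟨u.1.1, ?_⟩, ⟨u.1.2, ?_⟩)
        invFun := fun ab => ⟨(ab.1.1, ab.2.1), ?_⟩
        left_inv := fun u => by ext <;> rfl
        right_inv := fun ab => by ext <;> rfl }
    · exact congrArg Prod.fst u.2
    · exact congrArg Prod.snd u.2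
    · exact Prod.ext ab.1.2 ab.2.2
  rw [split, card_pow_eq_one_eq_gcd, card_pow_eq_one_eq_gcd,
    ZMod.card_units_eq_totient, ZMod.card_units_eq_totient,
    Nat.totient_prime hp, Nat.totient_prime hq]
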